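/- Let Y be a Banach space, ω ∈ ℕ, c ∈ ℂ \ {0}, A : ℤ → L(Y) with A(k+ω) = A(k) for all k ∈ ℤ, ‖A(k)‖ ≤ c₀(k) with c₀(k+ω) = c₀(k) > 0 and ∑_{v=1}^{∞} c₀(k−v)⋯c₀(k−1) < ∞ for all k. If f : ℤ → Y is (ω,c)-periodic, then the sequence x(k) := f(k−1) + ∑_{j=−∞}^{k−2} A(k−1)⋯A(j+1) f(j) is (ω,c)-periodic and solves x(k+1) = A(k)x(k) + f(k) for all k ∈ ℤ. -/

import Mathlib

open scoped BigOperators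

/-- `opProd A k v = A(k-1) ∘ A(k-2) ∘ ⋯ ∘ A(k-v)`. -/
def opProd {Y : Type*} [NormedAddCommGroup Y] [NormedSpace ℂ Y]
    (A : ℤ → Y →L[ℂ] Y) (k : ℤ) : ℕ → (Y →L[ℂ] Y)
  | 0 => 1
  | v + 1 => opProd A k v ∘L A (k - ((v : ℤ) + 1))

section Aux
variable {Y : Type*} [NormedAddCommGroup Y] [NormedSpace ℂ Y]

lemma opProd_norm_le (A : ℤ → Y →L[ℂ] Y) (c₀ : ℤ → ℝ) (hc₀ : ∀ k, 0 ≤ c₀ k)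
    (hAc : ∀ k, ‖A k‖ ≤ c₀ k) (k : ℤ) :
    ∀ v : ℕ, ‖opProd A k v‖ ≤ ∏ i ∈ Finset.range v, c₀ (k - 1 - (i : ℤ))
  | 0 => by
      simp only [opProd, Finset.range_zero, Finset.prod_empty]
      exact ContinuousLinearMap.norm_id_le
  | v + 1 => by
      rw [opProd, Finset.prod_range_succ]
      calc ‖opProd A k v ∘L A (k - ((v : ℤ) + 1))‖
          ≤ ‖opProd A k v‖ * ‖A (k - ((v : ℤ) + 1))‖ :=
            ContinuousLinearMap.opNorm_comp_le _ _
        _ ≤ (∏ i ∈ Finset.range v, c₀ (k - 1 - (i : ℤ))) * c₀ (k - 1 - (v : ℤ)) := by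
            apply mul_le_mul (opProd_norm_le A c₀ hc₀ hAc k v) ?_ (norm_nonneg _)
              (Finset.prod_nonneg fun i _ => hc₀ _)
            have h : k - ((v : ℤ) + 1) = k - 1 - (v : ℤ) := by ring
            rw [h]; exact hAc _

lemma opProd_per (A : ℤ → Y →L[ℂ] Y) (ω : ℕ) (hAper : ∀ k : ℤ, A (k + ω) = A k) (k : ℤ) :
    ∀ v : ℕ, opProd A (k + ω) v = opProd A k v
  | 0 => rfl
  | v + 1 => by
      rw [opProd, opProd, opProd_per A ω hAper k v]
      congr 1
      have h : k + (ω : ℤ) - ((v : ℤ) + 1) = (k - ((v : ℤ) + 1)) + ω := by ring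
      rw [h, hAper]

lemma opProd_succ_left (A : ℤ → Y →L[ℂ] Y) (k : ℤ) :
    ∀ v : ℕ, opProd A (k + 1) (v + 1) = A k ∘L opProd A k v
  | 0 => by
      show opProd A (k+1) 0 ∘L A (k + 1 - ((0:ℤ) + 1)) = _
      have h : k + (1:ℤ) - ((0:ℤ) + 1) = k := by ring
      rw [h]
      show (1 : Y →L[ℂ] Y) ∘L A k = A k ∘L 1
      ext y; simp
  | v + 1 => by
      show opProd A (k+1) (v+1) ∘L A (k + 1 - (((v+1 : ℕ) : ℤ) + 1)) = _
      rw [opProd_succ_left A k v, ContinuousLinearMap.comp_assoc]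
      congr 1
      show _ = opProd A k v ∘L A (k - ((v : ℤ) + 1))
      congr 2
      push_cast; ring

end Aux

/-- If `A` is `ω`-periodic, `‖A k‖ ≤ c₀ k` with `c₀` `ω`-periodic and
`∑_{v≥1} c₀(k−v)⋯c₀(k−1) < ∞`, and `f` is a bounded `(ω,c)`-periodic sequence, then
`x(k) = f(k−1) + ∑_{v=1}^∞ A(k−1)⋯A(k−v) f(k−1−v)` is an `(ω,c)`-periodic solution of
`x(k+1) = A(k) x(k) + f(k)`. -/
theorem stmt7 {Y : Type*} [NormedAddCommGroup Y] [NormedSpace ℂ Y] [CompleteSpace Y]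
    (ω : ℕ) (hω : 0 < ω) (c : ℂ) (hc : c ≠ 0)
    (A : ℤ → Y →L[ℂ] Y) (hAper : ∀ k : ℤ, A (k + ω) = A k)
    (c₀ : ℤ → ℝ) (hc₀pos : ∀ k, 0 < c₀ k) (hAc : ∀ k, ‖A k‖ ≤ c₀ k)
    (hc₀per : ∀ k : ℤ, c₀ (k + ω) = c₀ k)
    (hsum : ∀ k : ℤ, Summable (fun v : ℕ => ∏ i ∈ Finset.range (v + 1), c₀ (k - 1 - (i : ℤ))))
    (f : ℤ → Y) (hfper : ∀ k : ℤ, f (k + ω) = c • f k) (hfb : ∃ M : ℝ, ∀ k : ℤ, ‖f k‖ ≤ M) :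
    (∀ k : ℤ,
      (fun m : ℤ => f (m - 1) + ∑' v : ℕ, opProd A m (v + 1) (f (m - 1 - ((v : ℤ) + 1)))) (k + ω)
        = c • (fun m : ℤ =>
            f (m - 1) + ∑' v : ℕ, opProd A m (v + 1) (f (m - 1 - ((v : ℤ) + 1)))) k) ∧
    (∀ k : ℤ,
      (fun m : ℤ => f (m - 1) + ∑' v : ℕ, opProd A m (v + 1) (f (m - 1 - ((v : ℤ) + 1)))) (k + 1)
        = A k ((fun m : ℤ =>
            f (m - 1) + ∑' v : ℕ, opProd A m (v + 1) (f (m - 1 - ((v : ℤ) + 1)))) k) + f k) := by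
  obtain ⟨M, hM⟩ := hfb
  have hc₀ : ∀ k, 0 ≤ c₀ k := fun k => (hc₀pos k).le
  -- summability of the full series g k v = opProd A k v (f (k-1-v))
  set g : ℤ → ℕ → Y := fun k v => opProd A k v (f (k - 1 - (v : ℤ))) with hg
  have hS : ∀ k : ℤ, Summable (g k) := by
    intro k
    have hb : Summable (fun v : ℕ => (∏ i ∈ Finset.range v, c₀ (k - 1 - (i : ℤ))) * M) := by
      apply (summable_nat_add_iff 1).mp
      exact (hsum k).mul_right M
    apply Summable.of_norm_bounded hb
    intro v
    calc ‖g k v‖ ≤ ‖opProd A k v‖ * ‖f (k - 1 - (v : ℤ))‖ := (opProd A k v).le_opNorm _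
      _ ≤ (∏ i ∈ Finset.range v, c₀ (k - 1 - (i : ℤ))) * M :=
          mul_le_mul (opProd_norm_le A c₀ hc₀ hAc k v) (hM _) (norm_nonneg _)
            (Finset.prod_nonneg fun i _ => hc₀ _)
  have hS1 : ∀ k : ℤ, Summable (fun v : ℕ => opProd A k (v + 1) (f (k - 1 - ((v : ℤ) + 1)))) := by
    intro k
    have : Summable (fun v : ℕ => g k (v + 1)) := ((summable_nat_add_iff 1).mpr (hS k))
    refine this.congr fun v => ?_
    simp [hg]
  constructor
  · intro k
    simp only
    have h1 : k + (ω : ℤ) - 1 = (k - 1) + ω := by ring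
    have h2 : ∀ v : ℕ, k - 1 + (ω : ℤ) - ((v : ℤ) + 1) = (k - 1 - ((v : ℤ) + 1)) + ω := by
      intro v; ring
    rw [h1, hfper, smul_add]
    congr 1
    rw [← Summable.tsum_const_smul c (hS1 k)]
    apply tsum_congr
    intro v
    rw [h2 v, hfper, opProd_per A ω hAper k (v + 1), map_smul]
  · intro k
    simp only
    have h0 : k + (1 : ℤ) - 1 = k := by ring
    have hts : (∑' v : ℕ, opProd A (k+1) (v + 1) (f (k + 1 - 1 - ((v : ℤ) + 1))))
        = A k (∑' v : ℕ, g k v) := by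
      rw [ContinuousLinearMap.map_tsum _ (hS k)]
      apply tsum_congr
      intro v
      rw [opProd_succ_left A k v]
      have h3 : k + (1:ℤ) - 1 - ((v : ℤ) + 1) = k - 1 - (v : ℤ) := by ring
      rw [h3]
      rfl
    rw [hts, h0, Summable.tsum_eq_zero_add (hS k)]
    have hg0 : g k 0 = f (k - 1) := by simp [hg, opProd]
    rw [hg0, map_add]
    have h4 : (∑' v : ℕ, g k (v + 1))
        = ∑' v : ℕ, opProd A k (v + 1) (f (k - 1 - ((v : ℤ) + 1))) := by
      apply tsum_congr; intro v; simp [hg]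
    rw [h4, map_add]
    abel
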